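/- Let Φ be symmetric positive definite with λ_min(Φ) = a > 0, Σ_ε symmetric positive semidefinite, and α ∈ (0, 1/‖Φ‖). Let Σ be the unique solution of the Lyapunov equation ΦΣ + ΣΦ = Σ_ε, and Σ^α = α Σ_{k=0}^∞ (I − αΦ)^k Σ_ε (I − αΦ)^k. Then ‖Σ^α − Σ‖ ≤ α ‖Φ‖² ‖Σ‖ / a. -/

import Mathlib

open Matrix

noncomputable def vnorm {d : ℕ} (v : Fin d → ℝ) : ℝ := Real.sqrt (∑ i, v i ^ 2)

noncomputable def opNorm {d : ℕ} (A : Matrix (Fin d) (Fin d) ℝ) : ℝ :=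
  ‖Matrix.toEuclideanCLM (𝕜 := ℝ) A‖

open RealInnerProductSpace in
lemma opnorm_le_of_quadform {H : Type*} [NormedAddCommGroup H] [InnerProductSpace ℝ H]
    (T : H →L[ℝ] H) (c : ℝ) (hc : 0 ≤ c)
    (hsym : ∀ x y : H, ⟪T x, y⟫ = ⟪x, T y⟫)
    (h0 : ∀ x : H, 0 ≤ ⟪T x, x⟫) (h1 : ∀ x : H, ⟪T x, x⟫ ≤ c * ‖x‖ ^ 2) :
    ‖T‖ ≤ c := by
  refine T.opNorm_le_bound hc fun x => ?_
  have key : ∀ t : ℝ, 0 ≤ ⟪T (T x), T x⟫ * (t * t) + (2 * ‖T x‖ ^ 2) * t + ⟪T x, x⟫ := by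
    intro t
    have h := h0 (x + t • T x)
    have e : ⟪T (x + t • T x), x + t • T x⟫
        = ⟪T (T x), T x⟫ * (t * t) + (2 * ‖T x‖ ^ 2) * t + ⟪T x, x⟫ := by
      rw [map_add, _root_.map_smul]
      simp only [inner_add_left, inner_add_right, real_inner_smul_left, real_inner_smul_right]
      rw [hsym (T x) x, real_inner_self_eq_norm_sq (T x)]
      ring
    linarith [e ▸ h]
  have hd := discrim_le_zero key
  rw [discrim] at hd
  have hA : ⟪T (T x), T x⟫ ≤ c * ‖T x‖ ^ 2 := h1 (T x)
  have hC : ⟪T x, x⟫ ≤ c * ‖x‖ ^ 2 := h1 x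
  have hC0 : 0 ≤ ⟪T x, x⟫ := h0 x
  have hAC : ⟪T (T x), T x⟫ * ⟪T x, x⟫ ≤ (c * ‖T x‖ ^ 2) * (c * ‖x‖ ^ 2) :=
    mul_le_mul hA hC hC0 (by positivity)
  have hTx : (0:ℝ) ≤ ‖T x‖ := norm_nonneg _
  have hx : (0:ℝ) ≤ ‖x‖ := norm_nonneg _
  rcases eq_or_lt_of_le hTx with h₀ | h₀
  · rw [← h₀]; positivity
  · have h2 : ‖T x‖ ^ 2 ≤ (c * ‖x‖) ^ 2 := by nlinarith [hd, hAC, mul_pos h₀ h₀]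
    nlinarith [h2, h₀, mul_nonneg hc hx]

open RealInnerProductSpace in
lemma inner_toEuclideanCLM {d : ℕ} (A : Matrix (Fin d) (Fin d) ℝ) (x y : EuclideanSpace ℝ (Fin d)) :
    ⟪toEuclideanCLM (𝕜 := ℝ) A x, y⟫
      = (A.mulVec (WithLp.equiv 2 _ x)) ⬝ᵥ (WithLp.equiv 2 _ y) := by
  have h : ∀ i, (toEuclideanCLM (𝕜 := ℝ) A x) i = A.mulVec (WithLp.equiv 2 _ x) i := by
    intro i
    have := congrFun (ofLp_toEuclideanCLM (𝕜 := ℝ) A x) i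
    simpa [Matrix.toLin'_apply] using this
  simp [PiLp.inner_apply, RCLike.inner_apply, dotProduct, h, mul_comm]

section Aux
open scoped Matrix.Norms.L2Operator
open RealInnerProductSpace

set_option maxHeartbeats 2000000 in
theorem stmt_5_aux {d : ℕ} (a α : ℝ) (ha : 0 < a)
    (Φ Se S : Matrix (Fin d) (Fin d) ℝ)
    (hΦsymm : Φᵀ = Φ)
    (hmin : ∀ u : Fin d → ℝ, a * vnorm u ^ 2 ≤ u ⬝ᵥ Φ.mulVec u)
    (hα : 0 < α) (hα' : α ≤ 1 / ‖Φ‖)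
    (hLyap : Φ * S + S * Φ = Se) :
    ‖(α • ∑' k : ℕ, ((1 : Matrix (Fin d) (Fin d) ℝ) - α • Φ) ^ k * Se
            * ((1 : Matrix (Fin d) (Fin d) ℝ) - α • Φ) ^ k) - S‖
      ≤ α * ‖Φ‖ ^ 2 * ‖S‖ / a := by
  rcases Nat.eq_zero_or_pos d with hd | hd
  · subst hd
    have h0 : ∀ A : Matrix (Fin 0) (Fin 0) ℝ, ‖A‖ = 0 := fun A => by
      rw [Subsingleton.elim A 0, norm_zero]
    rw [h0, h0, h0]
    simp [div_nonneg, ha.le]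
  haveI : Nonempty (Fin d) := ⟨⟨0, hd⟩⟩
  -- quadratic form bounds on Φ
  have hquad_lo : ∀ x : EuclideanSpace ℝ (Fin d),
      a * ‖x‖ ^ 2 ≤ ⟪toEuclideanCLM (𝕜 := ℝ) Φ x, x⟫ := by
    intro x
    rw [_root_.inner_toEuclideanCLM]
    have h1 := hmin (WithLp.equiv 2 _ x)
    have h2 : vnorm (WithLp.equiv 2 (Fin d → ℝ) x) = ‖x‖ := by
      rw [vnorm, EuclideanSpace.norm_eq]
      simp [sq_abs]
    rw [h2] at h1
    rw [dotProduct_comm]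
    exact h1
  have hsymΦ : ∀ x y : EuclideanSpace ℝ (Fin d),
      ⟪toEuclideanCLM (𝕜 := ℝ) Φ x, y⟫ = ⟪x, toEuclideanCLM (𝕜 := ℝ) Φ y⟫ := by
    intro x y
    rw [_root_.inner_toEuclideanCLM, real_inner_comm, _root_.inner_toEuclideanCLM]
    simp only [dotProduct, mulVec, Finset.sum_mul]
    rw [Finset.sum_comm]
    refine Finset.sum_congr rfl fun i _ => Finset.sum_congr rfl fun j _ => ?_
    have hji : Φ j i = Φ i j := (congrFun (congrFun hΦsymm j) i).symm
    rw [hji]; ring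
  have hquad_hi : ∀ x : EuclideanSpace ℝ (Fin d),
      ⟪toEuclideanCLM (𝕜 := ℝ) Φ x, x⟫ ≤ ‖Φ‖ * ‖x‖ ^ 2 := by
    intro x
    calc ⟪toEuclideanCLM (𝕜 := ℝ) Φ x, x⟫ ≤ ‖toEuclideanCLM (𝕜 := ℝ) Φ x‖ * ‖x‖ :=
          real_inner_le_norm _ _
    _ ≤ (‖Φ‖ * ‖x‖) * ‖x‖ := by
        have := (toEuclideanCLM (𝕜 := ℝ) Φ).le_opNorm x
        have hnorm : ‖toEuclideanCLM (𝕜 := ℝ) Φ‖ = ‖Φ‖ := (Matrix.cstar_norm_def Φ).symm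
        nlinarith [norm_nonneg x, this, hnorm ▸ this]
    _ = ‖Φ‖ * ‖x‖ ^ 2 := by ring
  -- a ≤ ‖Φ‖
  have haΦ : a ≤ ‖Φ‖ := by
    set x : EuclideanSpace ℝ (Fin d) := EuclideanSpace.single ⟨0, hd⟩ (1:ℝ)
    have hx : ‖x‖ = 1 := by simp [x]
    have := le_trans (hquad_lo x) (hquad_hi x)
    rw [hx] at this
    simpa using this
  have hΦpos : 0 < ‖Φ‖ := lt_of_lt_of_le ha haΦ
  have hαΦ : α * ‖Φ‖ ≤ 1 := by
    rw [le_div_iff₀ hΦpos] at hα'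
    linarith
  have hαa1 : α * a ≤ 1 := le_trans (by nlinarith) hαΦ
  set r : ℝ := 1 - α * a with hr
  have hr0 : 0 ≤ r := by simp [hr]; linarith
  have hr1 : r < 1 := by simp [hr]; nlinarith
  set B : Matrix (Fin d) (Fin d) ℝ := (1 : Matrix (Fin d) (Fin d) ℝ) - α • Φ with hB
  -- ‖B‖ ≤ r
  have hBnorm : ‖B‖ ≤ r := by
    rw [Matrix.cstar_norm_def]
    apply opnorm_le_of_quadform _ _ hr0
    · intro x y
      simp only [hB, map_sub, _root_.map_one, _root_.map_smul]
      simp only [ContinuousLinearMap.sub_apply, ContinuousLinearMap.one_apply,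
        ContinuousLinearMap.smul_apply, inner_sub_left, inner_sub_right,
        real_inner_smul_left, real_inner_smul_right]
      rw [hsymΦ, real_inner_comm]
    · intro x
      simp only [hB, map_sub, _root_.map_one, _root_.map_smul]
      simp only [ContinuousLinearMap.sub_apply, ContinuousLinearMap.one_apply,
        ContinuousLinearMap.smul_apply, inner_sub_left, real_inner_smul_left]
      have := hquad_hi x
      have hxx : ⟪x, x⟫ = ‖x‖ ^ 2 := real_inner_self_eq_norm_sq x
      nlinarith [hα.le]
    · intro x
      simp only [hB, map_sub, _root_.map_one, _root_.map_smul]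
      simp only [ContinuousLinearMap.sub_apply, ContinuousLinearMap.one_apply,
        ContinuousLinearMap.smul_apply, inner_sub_left, real_inner_smul_left]
      have := hquad_lo x
      have hxx : ⟪x, x⟫ = ‖x‖ ^ 2 := real_inner_self_eq_norm_sq x
      nlinarith [hα.le]
  -- powers of B
  have hBk : ∀ k : ℕ, ‖B ^ k‖ ≤ r ^ k := by
    intro k
    induction k with
    | zero =>
      have hone : ‖(1 : Matrix (Fin d) (Fin d) ℝ)‖ ≤ 1 := by
        rw [Matrix.cstar_norm_def, _root_.map_one, ContinuousLinearMap.one_def]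
        exact ContinuousLinearMap.norm_id_le
      simpa using hone
    | succ k ih =>
      calc ‖B ^ (k + 1)‖ = ‖B * B ^ k‖ := by rw [pow_succ']
        _ ≤ ‖B‖ * ‖B ^ k‖ := norm_mul_le _ _
        _ ≤ r * r ^ k := mul_le_mul hBnorm ih (norm_nonneg _) hr0
        _ = r ^ (k + 1) := (pow_succ' r k).symm
  have hbound : ∀ (M : Matrix (Fin d) (Fin d) ℝ) (k : ℕ),
      ‖B ^ k * M * B ^ k‖ ≤ ‖M‖ * (r ^ 2) ^ k := by
    intro M k
    have h2 : (0:ℝ) ≤ ‖B ^ k‖ := norm_nonneg _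
    have h3 : (0:ℝ) ≤ ‖M‖ := norm_nonneg _
    have h4 : (0:ℝ) ≤ r ^ k := pow_nonneg hr0 k
    calc ‖B ^ k * M * B ^ k‖ ≤ ‖B ^ k * M‖ * ‖B ^ k‖ := norm_mul_le _ _
      _ ≤ (‖B ^ k‖ * ‖M‖) * ‖B ^ k‖ :=
          mul_le_mul_of_nonneg_right (norm_mul_le _ _) h2
      _ ≤ (r ^ k * ‖M‖) * r ^ k :=
          mul_le_mul (mul_le_mul_of_nonneg_right (hBk k) h3) (hBk k) h2 (by positivity)
      _ = ‖M‖ * (r ^ 2) ^ k := by rw [sq, mul_pow]; ring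
  have hr2 : r ^ 2 < 1 := by nlinarith
  have hr2' : (0:ℝ) ≤ r ^ 2 := sq_nonneg r
  have hsumgeo : Summable (fun k : ℕ => (r ^ 2) ^ k) := summable_geometric_of_lt_one hr2' hr2
  set g : ℕ → Matrix (Fin d) (Fin d) ℝ := fun k => B ^ k * Se * B ^ k with hg_def
  set h : ℕ → Matrix (Fin d) (Fin d) ℝ := fun k => B ^ k * (Φ * S * Φ) * B ^ k with hh_def
  set c : ℕ → Matrix (Fin d) (Fin d) ℝ := fun k => B ^ k * S * B ^ k with hc_def
  have hg : Summable g :=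
    Summable.of_norm_bounded (hsumgeo.mul_left ‖Se‖) (fun k => hbound Se k)
  have hh : Summable h :=
    Summable.of_norm_bounded (hsumgeo.mul_left ‖Φ * S * Φ‖) (fun k => hbound _ k)
  have hkey : ∀ k : ℕ, c k - c (k + 1) = α • g k - (α ^ 2) • h k := by
    intro k
    have e1 : S - B * S * B = α • Se - (α ^ 2) • (Φ * S * Φ) := by
      rw [← hLyap]
      simp only [hB, sub_mul, mul_sub, one_mul, mul_one, smul_mul_assoc, mul_smul_comm,
        smul_sub, smul_add, smul_smul]
      module
    calc c k - c (k + 1) = B ^ k * (S - B * S * B) * B ^ k := by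
          show B ^ k * S * B ^ k - B ^ (k+1) * S * B ^ (k+1) = _
          nth_rewrite 1 [pow_succ]
          rw [pow_succ']
          simp only [mul_sub, sub_mul, mul_assoc]
      _ = α • g k - (α ^ 2) • h k := by
          rw [e1]
          simp only [hg_def, hh_def, mul_sub, sub_mul, mul_smul_comm, smul_mul_assoc]
  have hc0 : c 0 = S := by simp [hc_def]
  have hps : ∀ N : ℕ, ∑ k ∈ Finset.range N, (α • g k - (α ^ 2) • h k) = S - c N := by
    intro N
    calc ∑ k ∈ Finset.range N, (α • g k - (α ^ 2) • h k)
        = ∑ k ∈ Finset.range N, (c k - c (k + 1)) :=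
          Finset.sum_congr rfl (fun k _ => (hkey k).symm)
      _ = c 0 - c N := Finset.sum_range_sub' c N
      _ = S - c N := by rw [hc0]
  have hcN : Filter.Tendsto c Filter.atTop (nhds 0) := by
    rw [tendsto_zero_iff_norm_tendsto_zero]
    refine squeeze_zero (fun N => norm_nonneg _) (fun N => hbound S N) ?_
    simpa using (tendsto_pow_atTop_nhds_zero_of_lt_one hr2' hr2).const_mul ‖S‖
  have hf : Summable (fun k => α • g k - (α ^ 2) • h k) :=
    (hg.const_smul α).sub (hh.const_smul (α ^ 2))
  have hsum1 : Filter.Tendsto (fun N => ∑ k ∈ Finset.range N, (α • g k - (α ^ 2) • h k))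
      Filter.atTop (nhds (∑' k, (α • g k - (α ^ 2) • h k))) :=
    hf.hasSum.tendsto_sum_nat
  have hsum2 : Filter.Tendsto (fun N => ∑ k ∈ Finset.range N, (α • g k - (α ^ 2) • h k))
      Filter.atTop (nhds S) := by
    have ht := Filter.Tendsto.sub (tendsto_const_nhds (x := S)) hcN
    rw [sub_zero] at ht
    exact ht.congr (fun N => (hps N).symm)
  have htsum_eq : (∑' k, (α • g k - (α ^ 2) • h k)) = S := tendsto_nhds_unique hsum1 hsum2
  have hsplit : (∑' k, (α • g k - (α ^ 2) • h k))
      = α • (∑' k, g k) - (α ^ 2) • (∑' k, h k) := by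
    rw [Summable.tsum_sub (hg.const_smul α) (hh.const_smul (α ^ 2)),
      Summable.tsum_const_smul α hg, Summable.tsum_const_smul (α ^ 2) hh]
  have hmain : α • (∑' k, g k) - S = (α ^ 2) • (∑' k, h k) := by
    rw [← htsum_eq, hsplit, sub_sub_cancel]
  have hΦSΦ : ‖Φ * S * Φ‖ ≤ ‖Φ‖ ^ 2 * ‖S‖ := by
    calc ‖Φ * S * Φ‖ ≤ ‖Φ * S‖ * ‖Φ‖ := norm_mul_le _ _
      _ ≤ (‖Φ‖ * ‖S‖) * ‖Φ‖ := mul_le_mul_of_nonneg_right (norm_mul_le _ _) (norm_nonneg _)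
      _ = ‖Φ‖ ^ 2 * ‖S‖ := by ring
  have hhn : Summable (fun k => ‖h k‖) :=
    Summable.of_nonneg_of_le (fun k => norm_nonneg _) (fun k => hbound _ k)
      (hsumgeo.mul_left ‖Φ * S * Φ‖)
  have h1r2pos : (0:ℝ) < 1 - r ^ 2 := by nlinarith
  have hH : ‖∑' k, h k‖ ≤ ‖Φ‖ ^ 2 * ‖S‖ * (1 - r ^ 2)⁻¹ := by
    calc ‖∑' k, h k‖ ≤ ∑' k, ‖h k‖ := norm_tsum_le_tsum_norm hhn
      _ ≤ ∑' k : ℕ, ‖Φ * S * Φ‖ * (r ^ 2) ^ k :=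
          Summable.tsum_le_tsum (fun k => hbound _ k) hhn (hsumgeo.mul_left _)
      _ = ‖Φ * S * Φ‖ * (1 - r ^ 2)⁻¹ := by
          rw [tsum_mul_left, tsum_geometric_of_lt_one hr2' hr2]
      _ ≤ ‖Φ‖ ^ 2 * ‖S‖ * (1 - r ^ 2)⁻¹ :=
          mul_le_mul_of_nonneg_right hΦSΦ (by positivity)
  have hαa : (0:ℝ) < α * a := mul_pos hα ha
  have h1r2 : α * a ≤ 1 - r ^ 2 := by nlinarith
  calc ‖(α • ∑' k, g k) - S‖ = ‖(α ^ 2) • ∑' k, h k‖ := by rw [hmain]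
    _ = α ^ 2 * ‖∑' k, h k‖ := by
        rw [norm_smul, Real.norm_eq_abs, abs_of_nonneg (sq_nonneg α)]
    _ ≤ α ^ 2 * (‖Φ‖ ^ 2 * ‖S‖ * (1 - r ^ 2)⁻¹) :=
        mul_le_mul_of_nonneg_left hH (sq_nonneg α)
    _ ≤ α ^ 2 * (‖Φ‖ ^ 2 * ‖S‖ * (α * a)⁻¹) := by
        gcongr
    _ = α * ‖Φ‖ ^ 2 * ‖S‖ / a := by
        field_simp

end Aux

/-- If `Σ` solves the Lyapunov equation `ΦΣ + ΣΦ = Σ_ε` and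
`Σ^α = α Σ_{k≥0} (I−αΦ)^k Σ_ε (I−αΦ)^k`, then `‖Σ^α − Σ‖ ≤ α‖Φ‖²‖Σ‖/a`. -/
theorem stmt_5 {d : ℕ} (a α : ℝ) (ha : 0 < a)
    (Φ Se S : Matrix (Fin d) (Fin d) ℝ)
    (hΦpd : Φ.PosDef)
    (hmin : ∀ u : Fin d → ℝ, a * vnorm u ^ 2 ≤ u ⬝ᵥ Φ.mulVec u)
    (hSe : Se.PosSemidef)
    (hα : 0 < α) (hα' : α ≤ 1 / opNorm Φ)
    (hLyap : Φ * S + S * Φ = Se) :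
    opNorm
        ((α • ∑' k : ℕ, ((1 : Matrix (Fin d) (Fin d) ℝ) - α • Φ) ^ k * Se
            * ((1 : Matrix (Fin d) (Fin d) ℝ) - α • Φ) ^ k) - S)
      ≤ α * opNorm Φ ^ 2 * opNorm S / a := by
  have hΦsymm : Φᵀ = Φ := by
    ext i j
    exact (congrFun (congrFun hΦpd.1 j) i).symm
  exact stmt_5_aux a α ha Φ Se S hΦsymm hmin hα hα' hLyap
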